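/- arXiv:1808.07033 — 3 statements merged into one kernel-verified Lean document; each statement's English description precedes it below -/
import Mathlib

section
/- Suppose that c ∈ (0,1] and that the Markovian coupling satisfies E_{x,y}[ρ(X',Y')] ≤ (1−c)·ρ(x,y) for all x,y ∈ S. Then for all probability measures μ, ν on S one has W_ρ(μp, νp) ≤ (1−c)·W_ρ(μ,ν). -/
open MeasureTheory ProbabilityTheory Set
open scoped ENNReal Classical

/-- The Kantorovich (L¹ Wasserstein) "distance" associated to a cost function `ρ`:
the infimum over all couplings `γ` of `μ` and `ν` of `∫ ρ dγ`. -/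
noncomputable def wassDist {S : Type*} [MeasurableSpace S] (ρ : S → S → ℝ)
    (μ ν : Measure S) : ℝ≥0∞ :=
  ⨅ (γ : Measure (S × S)) (_ : γ.map Prod.fst = μ ∧ γ.map Prod.snd = ν),
    ∫⁻ z, ENNReal.ofReal (ρ z.1 z.2) ∂γ


private lemma aux_map_bind {α β γ : Type*} [MeasurableSpace α] [MeasurableSpace β]
    [MeasurableSpace γ] (m : MeasureTheory.Measure α) (f : α → MeasureTheory.Measure β)
    (hf : Measurable f) (g : β → γ) (hg : Measurable g) :
    (m.bind f).map g = m.bind fun x => (f x).map g := by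
  have hmg : Measurable fun x => (f x).map g := (Measure.measurable_map g hg).comp hf
  ext s hs
  rw [Measure.map_apply hg hs, Measure.bind_apply (hg hs) hf.aemeasurable, Measure.bind_apply hs hmg.aemeasurable]
  refine lintegral_congr fun x => ?_
  rw [Measure.map_apply hg hs]

private lemma aux_bind_map {α β γ : Type*} [MeasurableSpace α] [MeasurableSpace β]
    [MeasurableSpace γ] (m : MeasureTheory.Measure α) (f : α → β) (hf : Measurable f)
    (g : β → MeasureTheory.Measure γ) (hg : Measurable g) :
    (m.map f).bind g = m.bind fun x => g (f x) := by
  have hgf : Measurable fun x => g (f x) := hg.comp hf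
  ext s hs
  have hcoe : Measurable fun b : β => g b s := (Measure.measurable_coe hs).comp hg
  rw [Measure.bind_apply hs hg.aemeasurable, Measure.bind_apply hs hgf.aemeasurable, lintegral_map hcoe hf]

/-- if the Markovian coupling contracts `ρ` with rate `c ∈ (0,1]`, then the
transition kernel `p` contracts the Kantorovich distance `W_ρ` with the same rate. -/
theorem stmt0 {S Ω : Type*} [MetricSpace S] [MeasurableSpace S] [BorelSpace S]
    [TopologicalSpace.SeparableSpace S] [MeasurableSpace Ω]
    -- the Markov transition kernel
    (p : Kernel S S) [IsMarkovKernel p]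
    -- the Markovian coupling of the transition probabilities
    (X' Y' : Ω → S) (hX' : Measurable X') (hY' : Measurable Y')
    (P : Kernel (S × S) Ω) [IsMarkovKernel P]
    (hmargX : ∀ x y : S, (P (x, y)).map X' = p x)
    (hmargY : ∀ x y : S, (P (x, y)).map Y' = p y)
    -- the distance function ρ
    (f₀ : ℝ → ℝ) (hf₀cont : ContinuousOn f₀ (Ici 0)) (hf₀conc : ConcaveOn ℝ (Ici 0) f₀)
    (hf₀mono : MonotoneOn f₀ (Ici 0)) (hf₀zero : f₀ 0 = 0) (hf₀pos : ∀ r > (0:ℝ), 0 < f₀ r)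
    (a δ : ℝ) (ha : 0 ≤ a) (hδ : 0 ≤ δ)
    (V : S → ℝ) (hV : Measurable V) (hVnonneg : ∀ x, 0 ≤ V x)
    (ρ : S → S → ℝ)
    (hρ : ∀ x y : S, ρ x y = f₀ (dist x y) + (if x = y then 0 else a + δ * V x + δ * V y))
    -- contraction of the coupling
    (c : ℝ) (hc : c ∈ Ioc (0:ℝ) 1)
    (hcontr : ∀ x y : S,
      ∫⁻ ω, ENNReal.ofReal (ρ (X' ω) (Y' ω)) ∂(P (x, y))
        ≤ ENNReal.ofReal ((1 - c) * ρ x y)) :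
    ∀ μ ν : Measure S, IsProbabilityMeasure μ → IsProbabilityMeasure ν →
      wassDist ρ (μ.bind fun x => p x) (ν.bind fun x => p x)
        ≤ ENNReal.ofReal (1 - c) * wassDist ρ μ ν := by
  intro μ ν hμ hν
  obtain ⟨hc0, hc1⟩ := hc
  haveI : SecondCountableTopology S := UniformSpace.secondCountable_of_separable S
  have h1c : (0:ℝ) ≤ 1 - c := by linarith
  -- nonnegativity of ρ
  have hρ0 : ∀ x y : S, 0 ≤ ρ x y := by
    intro x y
    rw [hρ]
    have h1 : 0 ≤ f₀ (dist x y) := by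
      have := hf₀mono (mem_Ici.2 le_rfl) (mem_Ici.2 (dist_nonneg : (0:ℝ) ≤ dist x y)) dist_nonneg
      rwa [hf₀zero] at this
    have h2 : (0:ℝ) ≤ (if x = y then 0 else a + δ * V x + δ * V y) := by
      split
      · exact le_rfl
      · have := hVnonneg x; have := hVnonneg y; nlinarith
    linarith
  -- measurability of ρ
  have hgm : Measurable fun r : ℝ => f₀ (max r 0) := by
    have hmono : Monotone fun r : ℝ => f₀ (max r 0) := fun r s h =>
      hf₀mono (mem_Ici.2 (le_max_right _ _)) (mem_Ici.2 (le_max_right _ _))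
        (max_le_max h le_rfl)
    exact hmono.measurable
  have hρmeas : Measurable fun z : S × S => ρ z.1 z.2 := by
    have heq : (fun z : S × S => ρ z.1 z.2)
        = fun z : S × S => f₀ (max (dist z.1 z.2) 0)
          + (if z.1 = z.2 then 0 else a + δ * V z.1 + δ * V z.2) := by
      funext z; rw [hρ, max_eq_left dist_nonneg]
    rw [heq]
    have hdiag : MeasurableSet {z : S × S | z.1 = z.2} :=
      (isClosed_eq continuous_fst continuous_snd).measurableSet
    refine (hgm.comp measurable_dist).add (Measurable.ite hdiag measurable_const ?_)
    exact ((measurable_const.add ((hV.comp measurable_fst).const_mul δ)).add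
      ((hV.comp measurable_snd).const_mul δ))
  have hF : Measurable fun z : S × S => ENNReal.ofReal (ρ z.1 z.2) :=
    hρmeas.ennreal_ofReal
  have hpair : Measurable fun ω => (X' ω, Y' ω) := hX'.prodMk hY'
  set q : Kernel (S × S) (S × S) := Kernel.map P (fun ω => (X' ω, Y' ω)) with hqdef
  have hqapp : ∀ z : S × S, q z = (P z).map (fun ω => (X' ω, Y' ω)) := fun z =>
    Kernel.map_apply P hpair z
  have hq : Measurable (fun z => q z : S × S → Measure (S × S)) := q.measurable
  have hpm : Measurable (fun x => p x : S → Measure S) := p.measurable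
  -- the key estimate for an arbitrary coupling γ
  have key : ∀ γ : Measure (S × S), γ.map Prod.fst = μ ∧ γ.map Prod.snd = ν →
      wassDist ρ (μ.bind fun x => p x) (ν.bind fun x => p x)
        ≤ ENNReal.ofReal (1 - c) * ∫⁻ z, ENNReal.ofReal (ρ z.1 z.2) ∂γ := by
    intro γ ⟨hγ1, hγ2⟩
    set γ' : Measure (S × S) := γ.bind fun z => q z with hγ'def
    -- first marginal of γ'
    have hqfst : ∀ z : S × S, (q z).map Prod.fst = p z.1 := by
      intro z
      rw [hqapp, Measure.map_map measurable_fst hpair]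
      have : (Prod.fst ∘ fun ω => (X' ω, Y' ω)) = X' := rfl
      rw [this]
      have := hmargX z.1 z.2
      rwa [Prod.mk.eta] at this
    have hqsnd : ∀ z : S × S, (q z).map Prod.snd = p z.2 := by
      intro z
      rw [hqapp, Measure.map_map measurable_snd hpair]
      have : (Prod.snd ∘ fun ω => (X' ω, Y' ω)) = Y' := rfl
      rw [this]
      have := hmargY z.1 z.2
      rwa [Prod.mk.eta] at this
    have hm1 : γ'.map Prod.fst = μ.bind fun x => p x := by
      rw [hγ'def, aux_map_bind γ _ hq Prod.fst measurable_fst]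
      simp_rw [hqfst]
      rw [← aux_bind_map γ Prod.fst measurable_fst _ hpm, hγ1]
    have hm2 : γ'.map Prod.snd = ν.bind fun x => p x := by
      rw [hγ'def, aux_map_bind γ _ hq Prod.snd measurable_snd]
      simp_rw [hqsnd]
      rw [← aux_bind_map γ Prod.snd measurable_snd _ hpm, hγ2]
    calc wassDist ρ (μ.bind fun x => p x) (ν.bind fun x => p x)
        ≤ ∫⁻ z, ENNReal.ofReal (ρ z.1 z.2) ∂γ' :=
          iInf_le_of_le γ' (iInf_le _ ⟨hm1, hm2⟩)
      _ = ∫⁻ z, ∫⁻ w, ENNReal.ofReal (ρ w.1 w.2) ∂(q z) ∂γ :=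
          Measure.lintegral_bind hq.aemeasurable hF.aemeasurable
      _ ≤ ∫⁻ z, ENNReal.ofReal (1 - c) * ENNReal.ofReal (ρ z.1 z.2) ∂γ := by
          refine lintegral_mono fun z => ?_
          rw [hqapp, lintegral_map hF hpair]
          rw [← ENNReal.ofReal_mul h1c]
          have := hcontr z.1 z.2
          rwa [Prod.mk.eta] at this
      _ = ENNReal.ofReal (1 - c) * ∫⁻ z, ENNReal.ofReal (ρ z.1 z.2) ∂γ :=
          lintegral_const_mul _ hF
  -- conclude: distribute the constant over the infimum
  have hne : Nonempty {γ : Measure (S × S) // γ.map Prod.fst = μ ∧ γ.map Prod.snd = ν} := by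
    refine ⟨⟨μ.prod ν, ?_, ?_⟩⟩
    · rw [Measure.map_fst_prod, measure_univ, one_smul]
    · rw [Measure.map_snd_prod, measure_univ, one_smul]
  have hrw : wassDist ρ μ ν
      = ⨅ γ : {γ : Measure (S × S) // γ.map Prod.fst = μ ∧ γ.map Prod.snd = ν},
          ∫⁻ z, ENNReal.ofReal (ρ z.1 z.2) ∂(γ : Measure (S × S)) := by
    rw [wassDist, iInf_subtype']
  rw [hrw, ENNReal.mul_iInf (by simp)]
  exact le_iInf fun γ => key γ.1 γ.2
end

section
/- Let f = a·1_{(0,∞)} + f₀ where a ≥ 0 and f₀ : [0,∞) → [0,∞) is concave, nondecreasing, Lipschitz, twice continuously differentiable on (0,∞) with f₀(0) = 0. Then for all x, y ∈ S with x ≠ y and r = d(x,y), assuming E_{x,y}[R'] < ∞, one has E_{x,y}[f(R')] − f(r) ≤ −a·π(x,y) + β(x,y)·f₀'(r) + (1/2)·α(x,y)·sup_{u∈((r−ε)⁺, r)} f₀''(u). -/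
open MeasureTheory ProbabilityTheory Set
open scoped ENNReal Classical

noncomputable section

variable {S Ω : Type*} [MetricSpace S] [MeasurableSpace S] [BorelSpace S] [MeasurableSpace Ω]

/-- `β(x,y) = E_{x,y}[ΔR]`, the expected change of the distance under the coupling. -/
def betaC (P : Kernel (S × S) Ω) (X' Y' : Ω → S) (x y : S) : ℝ :=
  ∫ ω, (dist (X' ω) (Y' ω) - dist x y) ∂(P (x, y))

/-- `α(x,y) = E_{x,y}[((ΔR)⁻ ∧ ε)²]`. -/
def alphaC (P : Kernel (S × S) Ω) (X' Y' : Ω → S) (ε : ℝ) (x y : S) : ℝ :=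
  ∫ ω, (min (max (dist x y - dist (X' ω) (Y' ω)) 0) ε) ^ 2 ∂(P (x, y))

/-- `π(x,y) = P_{x,y}[R' = 0]`, the coupling probability. -/
def piC (P : Kernel (S × S) Ω) (X' Y' : Ω → S) (x y : S) : ℝ :=
  ((P (x, y)) {ω | X' ω = Y' ω}).toReal

set_option maxHeartbeats 1000000 in
private lemma core_ineq (f₀ : ℝ → ℝ) (hconc : ConcaveOn ℝ (Ici 0) f₀)
    (hcont : ContinuousOn f₀ (Ici 0))
    (hsmooth : ContDiffOn ℝ 2 f₀ (Ioi 0))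
    {ε r : ℝ} (hε : 0 < ε) (hr : 0 < r) {t : ℝ} (ht : 0 ≤ t) :
    f₀ t - f₀ r ≤ (t - r) * deriv f₀ r
      + 1/2 * (min (max (r - t) 0) ε)^2
        * sSup (deriv (deriv f₀) '' Ioo (max (r - ε) 0) r) := by
  set A := max (r - ε) 0 with hAdef
  have hA0 : 0 ≤ A := le_max_right _ _
  have hAr : A < r := max_lt (by linarith) hr
  have hdiffOn : DifferentiableOn ℝ f₀ (Ioi 0) := hsmooth.differentiableOn two_ne_zero
  have hd1 : ∀ u ∈ Ioi (0:ℝ), HasDerivAt f₀ (deriv f₀ u) u := fun u hu =>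
    ((hdiffOn u hu).differentiableAt (isOpen_Ioi.mem_nhds hu)).hasDerivAt
  have hC1 : ContDiffOn ℝ 1 (deriv f₀) (Ioi 0) :=
    hsmooth.deriv_of_isOpen isOpen_Ioi (by norm_num)
  have hdiffOn2 : DifferentiableOn ℝ (deriv f₀) (Ioi 0) := hC1.differentiableOn one_ne_zero
  have hd2 : ∀ u ∈ Ioi (0:ℝ), HasDerivAt (deriv f₀) (deriv (deriv f₀) u) u := fun u hu =>
    ((hdiffOn2 u hu).differentiableAt (isOpen_Ioi.mem_nhds hu)).hasDerivAt
  have hcont1 : ContinuousOn (deriv f₀) (Ioi 0) := hC1.continuousOn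
  have hanti : AntitoneOn (deriv f₀) (Ioi 0) :=
    ConcaveOn.antitoneOn_deriv (hconc.subset Ioi_subset_Ici_self (convex_Ioi 0))
      (fun u hu => (hdiffOn u hu).differentiableAt (isOpen_Ioi.mem_nhds hu))
  have hneg2 : ∀ u ∈ Ioi (0:ℝ), deriv (deriv f₀) u ≤ 0 := by
    intro u hu
    have h := hasDerivAt_iff_tendsto_slope.1 (hd2 u hu)
    have h' : Filter.Tendsto (slope (deriv f₀) u) (nhdsWithin u (Ioi u))
        (nhds (deriv (deriv f₀) u)) :=
      h.mono_left (nhdsWithin_mono u fun v hv => (hv : u < v).ne')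
    refine le_of_tendsto h' ?_
    filter_upwards [self_mem_nhdsWithin] with v hv
    have hv' : u < v := hv
    have hfv : deriv f₀ v ≤ deriv f₀ u := hanti hu (hu.trans hv') hv'.le
    rw [slope_def_field]
    apply div_nonpos_of_nonpos_of_nonneg <;> linarith
  have hbdd : BddAbove (deriv (deriv f₀) '' Ioo A r) := by
    refine ⟨0, ?_⟩
    rintro _ ⟨u, hu, rfl⟩
    exact hneg2 u (lt_of_le_of_lt hA0 hu.1)
  set M := sSup (deriv (deriv f₀) '' Ioo A r) with hMdef
  have hmemle : ∀ η ∈ Ioo A r, deriv (deriv f₀) η ≤ M := fun η hη =>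
    le_csSup hbdd ⟨η, hη, rfl⟩
  -- key estimate on [A, r)
  have key : ∀ t', A ≤ t' → t' < r →
      f₀ t' - f₀ r ≤ (t' - r) * deriv f₀ r + 1/2 * (r - t')^2 * M := by
    intro t' hAt' ht'r
    have ht'0 : 0 ≤ t' := hA0.trans hAt'
    set φ : ℝ → ℝ := fun u =>
      f₀ r + (u - r) * deriv f₀ r + 1/2 * (u - r)^2 * M - f₀ u with hφdef
    have hsub : Icc t' r ⊆ Ici (0:ℝ) := fun u hu => le_trans ht'0 hu.1
    have hφcont : ContinuousOn φ (Icc t' r) := by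
      apply ContinuousOn.sub
      · apply Continuous.continuousOn; continuity
      · exact hcont.mono hsub
    have hφd : ∀ u ∈ Ioo t' r, HasDerivAt φ
        (deriv f₀ r + (u - r) * M - deriv f₀ u) u := by
      intro u hu
      have hu0 : 0 < u := lt_of_le_of_lt ht'0 hu.1
      have h1 : HasDerivAt (fun u : ℝ => f₀ r + (u - r) * deriv f₀ r
          + 1/2 * (u - r)^2 * M) (deriv f₀ r + (u - r) * M) u := by
        have : HasDerivAt (fun u : ℝ => f₀ r + (u - r) * deriv f₀ r
            + 1/2 * (u - r)^2 * M)
            (0 + (1 - 0) * deriv f₀ r + 1/2 * ((2 : ℕ) * (u - r)^(2-1) * (1 - 0)) * M) u := by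
          exact (((hasDerivAt_const u (f₀ r)).add
            (((hasDerivAt_id u).sub (hasDerivAt_const u r)).mul_const _)).add
            ((((((hasDerivAt_id u).sub (hasDerivAt_const u r)).pow 2).const_mul
              (1/2 : ℝ)).mul_const M)))
        convert this using 1
        ring
      exact h1.sub ((hd1 u hu0).congr_deriv rfl)
    have hφ' : ∀ u ∈ interior (Icc t' r), deriv φ u ≤ 0 := by
      rw [interior_Icc]
      intro u hu
      rw [(hφd u hu).deriv]
      have hu0 : 0 < u := lt_of_le_of_lt ht'0 hu.1
      have hur : u < r := hu.2
      obtain ⟨η, hη, hηeq⟩ := exists_deriv_eq_slope (deriv f₀) hur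
        (hcont1.mono (fun w hw => lt_of_lt_of_le hu0 hw.1))
        (hdiffOn2.mono (fun w hw => lt_trans hu0 hw.1))
      have hηA : η ∈ Ioo A r := ⟨lt_of_le_of_lt hAt' (hu.1.trans hη.1), hη.2⟩
      have hM' : deriv (deriv f₀) η ≤ M := hmemle η hηA
      have hru : (0:ℝ) < r - u := by linarith
      rw [eq_div_iff hru.ne'] at hηeq
      have heq : deriv f₀ r - deriv f₀ u = deriv (deriv f₀) η * (r - u) := hηeq.symm
      linarith [heq, mul_le_mul_of_nonneg_right hM' hru.le, mul_comm M (r - u)]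
    have hmono : AntitoneOn φ (Icc t' r) := by
      apply antitoneOn_of_deriv_nonpos (convex_Icc t' r) hφcont ?_ hφ'
      rw [interior_Icc]
      intro u hu
      exact (hφd u hu).differentiableAt.differentiableWithinAt
    have h0 : φ r ≤ φ t' := hmono ⟨le_rfl, ht'r.le⟩ ⟨ht'r.le, le_rfl⟩ ht'r.le
    have hφr : φ r = 0 := by simp [hφdef]
    rw [hφr] at h0
    simp only [hφdef] at h0
    have hsq : (t' - r)^2 = (r - t')^2 := by ring
    linarith [h0]
  -- case analysis on t
  rcases le_or_gt r t with hrt | htr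
  · -- t ≥ r
    have hm : max (r - t) 0 = 0 := max_eq_right (by linarith)
    rw [hm, min_eq_left hε.le]
    have : f₀ t - f₀ r ≤ (t - r) * deriv f₀ r := by
      rcases eq_or_lt_of_le hrt with rfl | hrt'
      · simp
      · obtain ⟨c, hc, hceq⟩ := exists_deriv_eq_slope f₀ hrt'
          (hcont.mono (fun w hw => le_trans hr.le hw.1))
          (hdiffOn.mono (fun w hw => lt_trans hr hw.1))
        have hcr : deriv f₀ c ≤ deriv f₀ r := hanti hr (hr.trans hc.1) hc.1.le
        have htr0 : (0:ℝ) < t - r := by linarith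
        rw [eq_div_iff (show t - r ≠ 0 by linarith)] at hceq
        have heq : f₀ t - f₀ r = deriv f₀ c * (t - r) := hceq.symm
        linarith [heq, mul_le_mul_of_nonneg_right hcr htr0.le]
    have h0 : 1/2 * (0:ℝ)^2 * M = 0 := by ring
    linarith [this]
  · rcases le_or_gt A t with hAt | htA
    · -- A ≤ t < r
      have h1 : max (r - t) 0 = r - t := max_eq_left (by linarith)
      have h2 : min (r - t) ε = r - t := by
        apply min_eq_left
        have : r - ε ≤ A := le_max_left _ _
        linarith
      rw [h1, h2]
      have := key t hAt htr
      linarith [this]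
    · -- 0 ≤ t < A, so A = r - ε > 0
      have hApos : 0 < A := lt_of_le_of_lt ht htA
      have hAeq : A = r - ε := by
        have h0 : 0 < r - ε := by
          rcases lt_max_iff.1 hApos with h | h
          · exact h
          · exact absurd h (lt_irrefl 0)
        exact max_eq_left h0.le
      have hεr : ε < r := by
        have : (0:ℝ) < r - ε := hAeq ▸ hApos
        linarith
      have h1 : max (r - t) 0 = r - t := max_eq_left (by linarith)
      have h2 : min (r - t) ε = ε := by
        apply min_eq_right
        rw [hAeq] at htA
        linarith
      rw [h1, h2]
      have hkey := key (r - ε) (le_of_eq hAeq) (by linarith)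
      -- MVT on [t, r - ε]
      have htrε : t < r - ε := hAeq ▸ htA
      obtain ⟨c, hc, hceq⟩ := exists_deriv_eq_slope f₀ htrε
        (hcont.mono (fun w hw => le_trans ht hw.1))
        (hdiffOn.mono (fun w hw => lt_of_le_of_lt ht hw.1))
      have hc0 : 0 < c := lt_of_le_of_lt ht hc.1
      have hcr : deriv f₀ r ≤ deriv f₀ c := hanti hc0 hr (by linarith [hc.2])
      have hd : (0:ℝ) < r - ε - t := by linarith
      rw [eq_div_iff hd.ne'] at hceq
      have heq : f₀ (r - ε) - f₀ t = deriv f₀ c * (r - ε - t) := hceq.symm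
      linarith [heq, mul_le_mul_of_nonneg_right hcr hd.le, hkey]

set_option maxHeartbeats 1000000 in
/-- basic estimate (7*): for `f = a·1_{(0,∞)} + f₀` with `f₀` concave,
nondecreasing, Lipschitz and C² on `(0,∞)`,
`E_{x,y}[f(R')] − f(r) ≤ −a·π(x,y) + β(x,y)·f₀'(r) + (1/2)·α(x,y)·sup_{((r−ε)⁺,r)} f₀''`. -/
theorem stmt5
    (p : Kernel S S) [IsMarkovKernel p]
    (X' Y' : Ω → S) (hX' : Measurable X') (hY' : Measurable Y')
    (P : Kernel (S × S) Ω) [IsMarkovKernel P]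
    (hmargX : ∀ x y : S, (P (x, y)).map X' = p x)
    (hmargY : ∀ x y : S, (P (x, y)).map Y' = p y)
    (ε : ℝ) (hε : 0 < ε)
    (a : ℝ) (ha : 0 ≤ a)
    (f₀ : ℝ → ℝ) (hf₀conc : ConcaveOn ℝ (Ici 0) f₀) (hf₀mono : MonotoneOn f₀ (Ici 0))
    (Lf : NNReal) (hf₀lip : LipschitzOnWith Lf f₀ (Ici 0))
    (hf₀smooth : ContDiffOn ℝ 2 f₀ (Ioi 0)) (hf₀0 : f₀ 0 = 0)
    (x y : S) (hxy : x ≠ y)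
    -- E_{x,y}[R'] < ∞
    (hint : Integrable (fun ω => dist (X' ω) (Y' ω)) (P (x, y))) :
    (∫ ω, ((if X' ω = Y' ω then 0 else a) + f₀ (dist (X' ω) (Y' ω))) ∂(P (x, y)))
        - (a + f₀ (dist x y))
      ≤ -a * piC P X' Y' x y + betaC P X' Y' x y * deriv f₀ (dist x y)
        + 1 / 2 * alphaC P X' Y' ε x y
          * sSup (deriv (deriv f₀) '' Ioo (max (dist x y - ε) 0) (dist x y)) := by
  classical
  set μ := P (x, y) with hμdef
  have hprob : IsProbabilityMeasure μ := inferInstance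
  set r := dist x y with hrdef
  have hr : 0 < r := dist_pos.2 hxy
  have hf₀c : ContinuousOn f₀ (Ici 0) := hf₀lip.continuousOn
  set D := deriv f₀ r with hDdef
  set M := sSup (deriv (deriv f₀) '' Ioo (max (r - ε) 0) r) with hMdef
  set g : Ω → ℝ := fun ω => dist (X' ω) (Y' ω) with hgdef
  have hgae : AEStronglyMeasurable g μ := hint.1
  obtain ⟨g', hg'sm, hgg'⟩ := hgae
  set h : Ω → ℝ := fun ω => max (g' ω) 0 with hhdef
  have hhmeas : Measurable h := hg'sm.measurable.max measurable_const
  have hh0 : ∀ ω, 0 ≤ h ω := fun ω => le_max_right _ _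
  have hgh : g =ᵐ[μ] h := hgg'.mono fun ω hω => by
    simp only [hhdef, ← hω]
    exact (max_eq_left dist_nonneg).symm
  have hhint : Integrable h μ := hint.congr hgh
  set s' : Set Ω := {ω | h ω = 0} with hs'def
  have hs'meas : MeasurableSet s' := hhmeas (measurableSet_singleton 0)
  have hsets : {ω | X' ω = Y' ω} =ᵐ[μ] s' := by
    rw [Filter.eventuallyEq_set]
    filter_upwards [hgh] with ω hω
    simp only [mem_setOf_eq, hs'def]
    rw [← hω]
    exact dist_eq_zero.symm
  have hπ : piC P X' Y' x y = (μ s').toReal := by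
    unfold piC
    rw [← hμdef, measure_congr hsets]
  set q : Ω → ℝ := fun ω => min (max (r - h ω) 0) ε with hqdef
  have hqmeas : Measurable q :=
    ((measurable_const.sub hhmeas).max measurable_const).min measurable_const
  have hq0 : ∀ ω, 0 ≤ q ω := fun ω => le_min (le_max_right _ _) hε.le
  have hqε : ∀ ω, q ω ≤ ε := fun ω => min_le_right _ _
  have hcore : ∀ ω, f₀ (h ω) - f₀ r ≤ (h ω - r) * D + 1/2 * (q ω)^2 * M :=
    fun ω => core_ineq f₀ hf₀conc hf₀c hf₀smooth hε hr (hh0 ω)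
  set F' : Ω → ℝ := fun ω => (if h ω = 0 then 0 else a) + f₀ (h ω) with hF'def
  have hFF' : (fun (ω : Ω) => (if X' ω = Y' ω then 0 else a) + f₀ (dist (X' ω) (Y' ω))) =ᵐ[μ] F' := by
    filter_upwards [hgh] with ω hω
    have hiff : (X' ω = Y' ω) ↔ (h ω = 0) := by
      rw [← hω]
      exact Iff.symm (dist_eq_zero (x := X' ω) (y := Y' ω))
    have hfd : dist (X' ω) (Y' ω) = h ω := hω
    simp only [hF'def, hfd]
    by_cases hc : X' ω = Y' ω
    · rw [if_pos hc, if_pos (hiff.1 hc)]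
    · rw [if_neg hc, if_neg (fun hh => hc (hiff.2 hh))]
  -- integrability
  have hf₁ : Continuous (fun t : ℝ => f₀ (max t 0)) :=
    hf₀c.comp_continuous (continuous_id.max continuous_const) (fun t => Set.mem_Ici.2 (le_max_right _ _))
  have hf0h_meas : Measurable fun ω => f₀ (h ω) := by
    have : (fun ω => f₀ (h ω)) = (fun t : ℝ => f₀ (max t 0)) ∘ h := by
      funext ω; simp [max_eq_left (hh0 ω)]
    rw [this]
    exact hf₁.measurable.comp hhmeas
  have hf0h_bound : ∀ ω, ‖f₀ (h ω)‖ ≤ (Lf : ℝ) * h ω := by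
    intro ω
    have hmem : h ω ∈ Ici (0:ℝ) := hh0 ω
    have h0mem : (0:ℝ) ∈ Ici (0:ℝ) := Set.self_mem_Ici
    have := hf₀lip.dist_le_mul (h ω) hmem 0 h0mem
    rw [Real.dist_eq, Real.dist_eq, hf₀0] at this
    simpa [abs_of_nonneg (hh0 ω)] using this
  have hf0hint : Integrable (fun ω => f₀ (h ω)) μ :=
    Integrable.mono' (hhint.const_mul (Lf:ℝ)) hf0h_meas.aestronglyMeasurable
      (Filter.Eventually.of_forall hf0h_bound)
  have hc1int : Integrable (fun ω => if h ω = 0 then (0:ℝ) else a) μ := by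
    refine Integrable.mono' (integrable_const |a|)
      ((Measurable.ite (hhmeas (measurableSet_singleton 0)) measurable_const
        measurable_const).aestronglyMeasurable) ?_
    refine Filter.Eventually.of_forall fun ω => ?_
    by_cases hc : h ω = 0 <;> simp [hc, abs_nonneg, le_abs_self]
  have hF'int : Integrable F' μ := hc1int.add hf0hint
  have hindint : Integrable (fun ω => s'.indicator (fun _ => (1:ℝ)) ω) μ :=
    (integrable_const (1:ℝ)).indicator hs'meas
  have hq2int : Integrable (fun ω => (q ω)^2) μ := by
    refine Integrable.mono' (integrable_const (ε^2))
      ((hqmeas.pow_const 2).aestronglyMeasurable) ?_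
    refine Filter.Eventually.of_forall fun ω => ?_
    rw [Real.norm_eq_abs, abs_of_nonneg (sq_nonneg _)]
    exact pow_le_pow_left₀ (hq0 ω) (hqε ω) 2
  have hA1int : Integrable (fun ω => -a * s'.indicator (fun _ => (1:ℝ)) ω) μ :=
    hindint.const_mul (-a)
  have hA2int : Integrable (fun ω => (h ω - r) * D) μ :=
    (hhint.sub (integrable_const r)).mul_const D
  have hA3int : Integrable (fun ω => 1/2 * (q ω)^2 * M) μ :=
    (hq2int.const_mul (1/2)).mul_const M
  have hinner_int : Integrable (fun ω =>
      -a * s'.indicator (fun _ => (1:ℝ)) ω + (h ω - r) * D + 1/2 * (q ω)^2 * M) μ :=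
    (hA1int.add hA2int).add hA3int
  have hGint : Integrable (fun ω => (a + f₀ r) +
      (-a * s'.indicator (fun _ => (1:ℝ)) ω + (h ω - r) * D + 1/2 * (q ω)^2 * M)) μ :=
    (integrable_const (a + f₀ r)).add hinner_int
  -- pointwise
  have hle : ∀ ω, F' ω ≤ (a + f₀ r) +
      (-a * s'.indicator (fun _ => (1:ℝ)) ω + (h ω - r) * D + 1/2 * (q ω)^2 * M) := by
    intro ω
    have hcw := hcore ω
    simp only [hF'def]
    by_cases hc : h ω = 0
    · rw [if_pos hc, Set.indicator_of_mem (show ω ∈ s' from hc)]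
      linarith [hcw]
    · rw [if_neg hc, Set.indicator_of_notMem (show ω ∉ s' from hc)]
      linarith [hcw]
  have hmain : ∫ ω, F' ω ∂μ ≤ ∫ ω, ((a + f₀ r) +
      (-a * s'.indicator (fun _ => (1:ℝ)) ω + (h ω - r) * D + 1/2 * (q ω)^2 * M)) ∂μ :=
    integral_mono hF'int hGint hle
  -- compute the right integral
  have h1 : ∫ ω, -a * s'.indicator (fun _ => (1:ℝ)) ω ∂μ = -a * (μ s').toReal := by
    rw [integral_const_mul, integral_indicator_const (1:ℝ) hs'meas]
    simp [measureReal_def]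
  have h2 : ∫ ω, (h ω - r) * D ∂μ = (∫ ω, (h ω - r) ∂μ) * D :=
    integral_mul_const D _
  have h3 : ∫ ω, 1/2 * (q ω)^2 * M ∂μ = 1/2 * (∫ ω, (q ω)^2 ∂μ) * M := by
    rw [integral_mul_const, integral_const_mul]
  have e1 : ∫ ω, ((a + f₀ r) +
      (-a * s'.indicator (fun _ => (1:ℝ)) ω + (h ω - r) * D + 1/2 * (q ω)^2 * M)) ∂μ
      = (a + f₀ r) + (-a * (μ s').toReal + (∫ ω, (h ω - r) ∂μ) * D
        + 1/2 * (∫ ω, (q ω)^2 ∂μ) * M) := by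
    have s0 : ∫ ω, ((a + f₀ r) +
        (-a * s'.indicator (fun _ => (1:ℝ)) ω + (h ω - r) * D + 1/2 * (q ω)^2 * M)) ∂μ
        = (∫ _ω, (a + f₀ r) ∂μ) + ∫ ω,
          (-a * s'.indicator (fun _ => (1:ℝ)) ω + (h ω - r) * D + 1/2 * (q ω)^2 * M) ∂μ :=
      integral_add (integrable_const _) hinner_int
    have s1 : ∫ ω, (-a * s'.indicator (fun _ => (1:ℝ)) ω + (h ω - r) * D
        + 1/2 * (q ω)^2 * M) ∂μ
        = (∫ ω, (-a * s'.indicator (fun _ => (1:ℝ)) ω + (h ω - r) * D) ∂μ)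
          + ∫ ω, 1/2 * (q ω)^2 * M ∂μ :=
      integral_add (hA1int.add hA2int) hA3int
    have s2 : ∫ ω, (-a * s'.indicator (fun _ => (1:ℝ)) ω + (h ω - r) * D) ∂μ
        = (∫ ω, -a * s'.indicator (fun _ => (1:ℝ)) ω ∂μ) + ∫ ω, (h ω - r) * D ∂μ :=
      integral_add hA1int hA2int
    have s3 : ∫ _ω, (a + f₀ r) ∂μ = (a + f₀ r) := by
      simp [integral_const, measure_univ]
    rw [s0, s1, s2, s3, h1, h2, h3]
  -- identify betaC, alphaC, piC
  have hbeta : betaC P X' Y' x y = ∫ ω, (h ω - r) ∂μ := by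
    unfold betaC
    rw [← hμdef, ← hrdef]
    refine integral_congr_ae (hgh.mono fun ω hω => ?_)
    exact congrArg (fun z => z - r) hω
  have halpha : alphaC P X' Y' ε x y = ∫ ω, (q ω)^2 ∂μ := by
    unfold alphaC
    rw [← hμdef, ← hrdef]
    refine integral_congr_ae (hgh.mono fun ω hω => ?_)
    exact congrArg (fun z => (min (max (r - z) 0) ε)^2) hω
  have hintF : (∫ ω, ((if X' ω = Y' ω then 0 else a) + f₀ (dist (X' ω) (Y' ω))) ∂μ)
      = ∫ ω, F' ω ∂μ := integral_congr_ae hFF'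
  rw [hintF, hπ, hbeta, halpha]
  rw [e1] at hmain
  linarith [hmain]

end
end

section
/- There exists a universal constant p₀ ∈ (0,1) with p₀ ≥ 0.15 (one may take p₀ = ∫₁^∞ φ_{0,1}(t)dt, where φ_{0,1} is the standard normal density) such that for the coupling of Euler transition steps, π(x,y) ≥ p₀ whenever r̂ ≤ 2√h, for all x, y ∈ ℝ^d, every dimension d ≥ 1, every step size h > 0 and every measurable drift b. -/
open MeasureTheory ProbabilityTheory Set
open scoped ENNReal Classical RealInnerProductSpace

noncomputable section

/-- Euclidean state space `ℝ^d`. -/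
abbrev Ed (d : ℕ) := EuclideanSpace ℝ (Fin d)

/-- The standard Gaussian measure `N(0, I_d)` on `ℝ^d`. -/
def stdGaussian (d : ℕ) : Measure (Ed d) :=
  (Measure.pi fun _ : Fin d => gaussianReal 0 1).map
    (MeasurableEquiv.toLp 2 (Fin d → ℝ))

/-- The uniform distribution on the unit interval. -/
def unif01 : Measure ℝ := volume.restrict (Set.Ioc (0:ℝ) 1)

variable {d : ℕ}

/-- The deterministic part of the Euler step: `x̂ = x + h·b(x)`. -/
def hatPt (h : ℝ) (b : Ed d → Ed d) (x : Ed d) : Ed d := x + h • b x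

/-- Density ratio `φ_{ŷ,hI}(w) / φ_{x̂,hI}(w)` of the Gaussian transition densities. -/
def densRatio (h : ℝ) (xh yh w : Ed d) : ℝ :=
  Real.exp ((‖w - xh‖ ^ 2 - ‖w - yh‖ ^ 2) / (2 * h))

/-- The reflected point `Y'_refl = ŷ + √h (I − 2êêᵀ) z`, where `ê` is the unit vector in
direction `x̂ − ŷ` (and `ê = 0` if `x̂ = ŷ`). -/
def reflPt (h : ℝ) (xh yh z : Ed d) : Ed d :=
  yh + Real.sqrt h •
    (z - (2 * ⟪‖xh - yh‖⁻¹ • (xh - yh), z⟫) • (‖xh - yh‖⁻¹ • (xh - yh)))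

/-- The coupling map: given the noise `z` and the uniform variable `u`, it returns
`X' = x̂ + √h z` and `Y' = X'` if `u ≤ φ_{ŷ,hI}(X')/φ_{x̂,hI}(X')`, `Y' = Y'_refl`
otherwise. -/
def cplMap (h : ℝ) (b : Ed d → Ed d) (x y : Ed d) (zu : Ed d × ℝ) : Ed d × Ed d :=
  (hatPt h b x + Real.sqrt h • zu.1,
    if zu.2 ≤ densRatio h (hatPt h b x) (hatPt h b y) (hatPt h b x + Real.sqrt h • zu.1)
    then hatPt h b x + Real.sqrt h • zu.1
    else reflPt h (hatPt h b x) (hatPt h b y) zu.1)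

/-- The law of the coupled pair `(X', Y')` of Euler transition steps from `x` and `y`. -/
def cplMeasure (h : ℝ) (b : Ed d → Ed d) (x y : Ed d) : Measure (Ed d × Ed d) :=
  ((stdGaussian d).prod unif01).map (cplMap h b x y)

/-- `β(x,y) = E_{x,y}[R' − r]`. -/
def betaE (h : ℝ) (b : Ed d → Ed d) (x y : Ed d) : ℝ :=
  ∫ w, (‖w.1 - w.2‖ - ‖x - y‖) ∂(cplMeasure h b x y)

/-- `β̂(x,y) = E_{x,y}[R' − r̂]`. -/
def betaHat (h : ℝ) (b : Ed d → Ed d) (x y : Ed d) : ℝ :=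
  ∫ w, (‖w.1 - w.2‖ - ‖hatPt h b x - hatPt h b y‖) ∂(cplMeasure h b x y)

/-- `u(s) = √h·1_{s<√h}`. -/
def uFun (h s : ℝ) : ℝ := if s < Real.sqrt h then Real.sqrt h else 0

/-- `l(s) = √h·1_{s≥√h}`. -/
def lFun (h s : ℝ) : ℝ := if s < Real.sqrt h then 0 else Real.sqrt h

/-- `α(x,y) = E_{x,y}[(((R'−r) ∧ u(r)) ∨ (−l(r)))²]`. -/
def alphaE (h : ℝ) (b : Ed d → Ed d) (x y : Ed d) : ℝ :=
  ∫ w, (max (min (‖w.1 - w.2‖ - ‖x - y‖) (uFun h ‖x - y‖)) (-(lFun h ‖x - y‖))) ^ 2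
    ∂(cplMeasure h b x y)

/-- `α̂(x,y) = E_{x,y}[(((R'−r̂) ∧ u(r̂)) ∨ (−l(r̂)))²]`. -/
def alphaHat (h : ℝ) (b : Ed d → Ed d) (x y : Ed d) : ℝ :=
  ∫ w, (max (min (‖w.1 - w.2‖ - ‖hatPt h b x - hatPt h b y‖)
      (uFun h ‖hatPt h b x - hatPt h b y‖)) (-(lFun h ‖hatPt h b x - hatPt h b y‖))) ^ 2
    ∂(cplMeasure h b x y)

/-- `π(x,y) = P_{x,y}[R' = 0] = P_{x,y}[X' = Y']`. -/
def piE (h : ℝ) (b : Ed d → Ed d) (x y : Ed d) : ℝ :=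
  ((cplMeasure h b x y) {w | w.1 = w.2}).toReal

/-- (C1) one-sided Lipschitz condition. -/
def CondC1 (b : Ed d → Ed d) (J : ℝ) : Prop :=
  ∀ x y : Ed d, ⟪x - y, b x - b y⟫ ≤ J * ‖x - y‖ ^ 2

/-- (C2) strict contractivity outside a ball of radius `𝓡`. -/
def CondC2 (b : Ed d → Ed d) (K 𝓡 : ℝ) : Prop :=
  ∀ x y : Ed d, 𝓡 ≤ ‖x - y‖ → ⟪x - y, b x - b y⟫ ≤ -K * ‖x - y‖ ^ 2

/-- (C3) global Lipschitz condition. -/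
def CondC3 (b : Ed d → Ed d) (L : ℝ) : Prop :=
  ∀ x y : Ed d, ‖b x - b y‖ ≤ L * ‖x - y‖

/-- Standard normal density `φ_{0,1}`. -/
def stdNormalPdf (t : ℝ) : ℝ := (Real.sqrt (2 * Real.pi))⁻¹ * Real.exp (-(t ^ 2) / 2)


section AuxProof

lemma stdNormalPdf_eq : stdNormalPdf = ProbabilityTheory.gaussianPDFReal 0 1 := by
  funext x
  simp [stdNormalPdf, ProbabilityTheory.gaussianPDFReal, neg_div]

lemma integrable_stdNormalPdf : Integrable stdNormalPdf := by
  rw [stdNormalPdf_eq]; exact ProbabilityTheory.integrable_gaussianPDFReal 0 1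

lemma stdNormalPdf_nonneg (t : ℝ) : 0 ≤ stdNormalPdf t := by
  rw [stdNormalPdf_eq]; exact ProbabilityTheory.gaussianPDFReal_nonneg 0 1 t

lemma exp_neg_ge_quad {x : ℝ} (hx : 0 ≤ x) : Real.exp (-x) ≤ 1 - x + x^2/2 := by
  set g : ℝ → ℝ := fun y => 1 - y + y^2/2 - Real.exp (-y) with hg
  have hder : ∀ y : ℝ, HasDerivAt g (-1 + y + Real.exp (-y)) y := by
    intro y
    have h1 : HasDerivAt (fun y : ℝ => Real.exp (-y)) (-Real.exp (-y)) y := by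
      simpa using ((hasDerivAt_id y).neg).exp
    have h2 : HasDerivAt (fun y : ℝ => 1 - y + y^2/2) (-1 + y) y := by
      have := ((hasDerivAt_id y).const_sub 1).add ((hasDerivAt_pow 2 y).div_const 2)
      exact this.congr_deriv (by ring)
    exact (h2.sub h1).congr_deriv (by ring)
  have hmono : MonotoneOn g (Ici 0) := by
    refine monotoneOn_of_deriv_nonneg (convex_Ici 0) (Continuous.continuousOn (by fun_prop)) ?_ ?_
    · exact fun y _ => (hder y).differentiableAt.differentiableWithinAt
    · intro y hy
      rw [interior_Ici] at hy
      rw [(hder y).deriv]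
      have := Real.add_one_le_exp (-y)
      nlinarith [Real.exp_pos (-y), (mem_Ioi.1 hy).le]
  have h0 : g 0 = 0 := by simp [hg]
  have := hmono (self_mem_Ici) (mem_Ici.2 hx) hx
  rw [h0] at this
  simp only [hg] at this
  linarith

lemma exp_neg_ge_cubic {x : ℝ} (hx : 0 ≤ x) : 1 - x + x^2/2 - x^3/6 ≤ Real.exp (-x) := by
  set g : ℝ → ℝ := fun y => Real.exp (-y) - (1 - y + y^2/2 - y^3/6) with hg
  have hder : ∀ y : ℝ, HasDerivAt g (-Real.exp (-y) + 1 - y + y^2/2) y := by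
    intro y
    have h1 : HasDerivAt (fun y : ℝ => Real.exp (-y)) (-Real.exp (-y)) y := by
      simpa using ((hasDerivAt_id y).neg).exp
    have h2 : HasDerivAt (fun y : ℝ => 1 - y + y^2/2 - y^3/6) (-1 + y - y^2/2) y := by
      have := (((hasDerivAt_id y).const_sub 1).add ((hasDerivAt_pow 2 y).div_const 2)).sub
        ((hasDerivAt_pow 3 y).div_const 6)
      exact this.congr_deriv (by ring)
    have := h1.sub h2
    exact this.congr_deriv (by ring)
  have hmono : MonotoneOn g (Ici 0) := by
    refine monotoneOn_of_deriv_nonneg (convex_Ici 0) (Continuous.continuousOn (by fun_prop)) ?_ ?_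
    · exact fun y _ => (hder y).differentiableAt.differentiableWithinAt
    · intro y hy
      rw [interior_Ici] at hy
      rw [(hder y).deriv]
      have := exp_neg_ge_quad hy.le
      linarith
  have h0 : g 0 = 0 := by simp [hg]
  have := hmono (self_mem_Ici) (mem_Ici.2 hx) hx
  rw [h0] at this
  simp only [hg] at this
  linarith

/-- auxiliary polynomial `P` -/
def Pp (s : ℝ) : ℝ := 1 - s^2/2 + s^4/8 - s^6/48

/-- auxiliary polynomial `Q` with `Q - Q' = P` -/
def Qp (s : ℝ) : ℝ := -12 - 13*s - 13/2*s^2 - 2*s^3 - 1/2*s^4 - 1/8*s^5 - 1/48*s^6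

lemma hasDerivAt_Qp (s : ℝ) :
    HasDerivAt Qp (-13 - 13*s - 6*s^2 - 2*s^3 - 5/8*s^4 - 1/8*s^5) s := by
  unfold Qp
  have h1 := hasDerivAt_id s
  have h2 := hasDerivAt_pow 2 s
  have h3 := hasDerivAt_pow 3 s
  have h4 := hasDerivAt_pow 4 s
  have h5 := hasDerivAt_pow 5 s
  have h6 := hasDerivAt_pow 6 s
  have := ((((((hasDerivAt_const s (-12:ℝ)).sub (h1.const_mul 13)).sub
    (h2.const_mul (13/2))).sub (h3.const_mul 2)).sub (h4.const_mul (1/2))).sub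
    (h5.const_mul (1/8))).sub (h6.const_mul (1/48))
  exact this.congr_deriv (by push_cast; ring)

lemma Pp_le_exp {s : ℝ} (hs : 0 ≤ s) : Pp s ≤ Real.exp (-(s^2/2)) := by
  have := exp_neg_ge_cubic (x := s^2/2) (by positivity)
  have h : Pp s = 1 - s^2/2 + (s^2/2)^2/2 - (s^2/2)^3/6 := by unfold Pp; ring
  rw [h]; convert this using 2

/-- The lower-bounding function on `[1, 11/4]`. -/
def gLow (t : ℝ) : ℝ :=
  (Real.sqrt (2 * Real.pi))⁻¹ * (Real.exp (-(2:ℝ)⁻¹) * (Real.exp (1 - t) * Pp (t-1)))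

/-- its antiderivative -/
def FLow (t : ℝ) : ℝ :=
  (Real.sqrt (2 * Real.pi))⁻¹ * (Real.exp (-(2:ℝ)⁻¹) * (-(Real.exp (1 - t) * Qp (t-1))))

lemma hasDerivAt_FLow (t : ℝ) : HasDerivAt FLow (gLow t) t := by
  have he : HasDerivAt (fun t : ℝ => Real.exp (1 - t)) (-Real.exp (1 - t)) t := by
    simpa using ((hasDerivAt_id t).const_sub 1).exp
  have hq : HasDerivAt (fun t : ℝ => Qp (t - 1))
      (-13 - 13*(t-1) - 6*(t-1)^2 - 2*(t-1)^3 - 5/8*(t-1)^4 - 1/8*(t-1)^5) t := by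
    have := (hasDerivAt_Qp (t-1)).comp t ((hasDerivAt_id t).sub_const 1)
    simpa [Function.comp_def] using this
  have := ((he.mul hq).neg.const_mul (Real.exp (-(2:ℝ)⁻¹))).const_mul
    (Real.sqrt (2 * Real.pi))⁻¹
  refine this.congr_deriv ?_
  unfold gLow Pp Qp
  ring

lemma gLow_cont : Continuous gLow := by unfold gLow Pp; fun_prop

lemma gLow_le_pdf {t : ℝ} (ht : 1 ≤ t) : gLow t ≤ stdNormalPdf t := by
  unfold gLow stdNormalPdf
  have h1 : Real.exp (-(2:ℝ)⁻¹) * (Real.exp (1 - t) * Pp (t-1))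
      ≤ Real.exp (-(t^2)/2) := by
    have hP := Pp_le_exp (s := t - 1) (by linarith)
    have hpos : (0:ℝ) < Real.exp (-(2:ℝ)⁻¹) * Real.exp (1 - t) := by positivity
    calc Real.exp (-(2:ℝ)⁻¹) * (Real.exp (1 - t) * Pp (t-1))
        ≤ Real.exp (-(2:ℝ)⁻¹) * (Real.exp (1 - t) * Real.exp (-((t-1)^2/2))) := by
          apply mul_le_mul_of_nonneg_left _ (Real.exp_pos _).le
          exact mul_le_mul_of_nonneg_left hP (Real.exp_pos _).le
      _ = Real.exp (-(t^2)/2) := by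
          rw [← Real.exp_add, ← Real.exp_add]; congr 1; ring
  apply mul_le_mul_of_nonneg_left h1
  positivity

lemma sqrt_two_pi_le : Real.sqrt (2 * Real.pi) ≤ 2.50664 := by
  rw [show (2.50664:ℝ) = Real.sqrt (2.50664^2) by
    rw [Real.sqrt_sq]; norm_num]
  apply Real.sqrt_le_sqrt
  nlinarith [Real.pi_lt_d6]

lemma exp_half_le : Real.exp (2⁻¹ : ℝ) ≤ 1.64873 := by
  have h : Real.exp (2⁻¹ : ℝ)^2 = Real.exp 1 := by
    rw [← Real.exp_nat_mul]; norm_num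
  nlinarith [Real.exp_one_lt_d9, Real.exp_pos (2⁻¹:ℝ)]

lemma exp_seven_quarter_le : Real.exp ((7:ℝ)/4) ≤ 5.75461 := by
  have h : Real.exp ((7:ℝ)/4)^4 = Real.exp 1 ^ 7 := by
    rw [← Real.exp_nat_mul, ← Real.exp_nat_mul]; norm_num
  have he : Real.exp 1 ≤ 2.7182818286 := Real.exp_one_lt_d9.le
  have h7 : Real.exp 1 ^ 7 ≤ 2.7182818286 ^ 7 :=
    pow_le_pow_left₀ (Real.exp_pos 1).le he 7
  have h4 : Real.exp ((7:ℝ)/4) ^ 4 ≤ (5.75461:ℝ)^4 := by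
    rw [h]; refine h7.trans (by norm_num)
  exact le_of_pow_le_pow_left₀ (by norm_num) (by norm_num) h4

lemma p0_lb : (0.15 : ℝ) ≤ ∫ t in Set.Ioi (1:ℝ), stdNormalPdf t := by
  have hmono : ∫ t in Set.Ioc (1:ℝ) (11/4), stdNormalPdf t
      ≤ ∫ t in Set.Ioi (1:ℝ), stdNormalPdf t := by
    apply setIntegral_mono_set integrable_stdNormalPdf.integrableOn
      (ae_of_all _ stdNormalPdf_nonneg)
    exact HasSubset.Subset.eventuallyLE (fun t ht => ht.1)
  have hIoc : ∫ t in Set.Ioc (1:ℝ) (11/4), stdNormalPdf t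
      = ∫ t in (1:ℝ)..(11/4), stdNormalPdf t := by
    rw [intervalIntegral.integral_of_le (by norm_num)]
  have hlow : ∫ t in (1:ℝ)..(11/4), gLow t ≤ ∫ t in (1:ℝ)..(11/4), stdNormalPdf t := by
    apply intervalIntegral.integral_mono_on (by norm_num)
      (gLow_cont.intervalIntegrable _ _)
      (integrable_stdNormalPdf.intervalIntegrable ..)
    exact fun t ht => gLow_le_pdf ht.1
  have hval : ∫ t in (1:ℝ)..(11/4), gLow t = FLow (11/4) - FLow 1 := by
    apply intervalIntegral.integral_eq_sub_of_hasDerivAt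
      (fun t _ => hasDerivAt_FLow t) (gLow_cont.intervalIntegrable _ _)
  have hF : FLow (11/4) - FLow 1 = (Real.sqrt (2 * Real.pi))⁻¹ *
      (Real.exp (-(2:ℝ)⁻¹) * (Real.exp (-(7:ℝ)/4) * (14296249/196608) - 12)) := by
    unfold FLow
    rw [show (11:ℝ)/4 - 1 = 7/4 by norm_num, show (1:ℝ) - 11/4 = -(7/4) by norm_num]
    simp only [sub_self, Real.exp_zero]
    unfold Qp
    rw [show (-(7/4) : ℝ) = -7/4 by norm_num]
    ring
  -- numeric bounds
  have h2pi : (0:ℝ) < Real.sqrt (2 * Real.pi) := by positivity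
  have hc : (2.50664:ℝ)⁻¹ ≤ (Real.sqrt (2 * Real.pi))⁻¹ :=
    inv_anti₀ h2pi sqrt_two_pi_le
  have hhalf : (1.64873:ℝ)⁻¹ ≤ Real.exp (-(2:ℝ)⁻¹) := by
    rw [Real.exp_neg]
    exact inv_anti₀ (Real.exp_pos _) exp_half_le
  have hq : (5.75461:ℝ)⁻¹ ≤ Real.exp (-(7:ℝ)/4) := by
    rw [show (-(7:ℝ)/4) = -((7:ℝ)/4) by norm_num, Real.exp_neg]
    exact inv_anti₀ (Real.exp_pos _) exp_seven_quarter_le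
  have hinner : (5.75461:ℝ)⁻¹ * (14296249/196608) - 12
      ≤ Real.exp (-(7:ℝ)/4) * (14296249/196608) - 12 := by
    have := mul_le_mul_of_nonneg_right hq (by norm_num : (0:ℝ) ≤ 14296249/196608)
    linarith
  have hinner_pos : (0:ℝ) ≤ (5.75461:ℝ)⁻¹ * (14296249/196608) - 12 := by norm_num
  have step1 : (1.64873:ℝ)⁻¹ * ((5.75461:ℝ)⁻¹ * (14296249/196608) - 12)
      ≤ Real.exp (-(2:ℝ)⁻¹) * (Real.exp (-(7:ℝ)/4) * (14296249/196608) - 12) := by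
    apply mul_le_mul hhalf hinner hinner_pos (Real.exp_pos _).le
  have step2 : (2.50664:ℝ)⁻¹ * ((1.64873:ℝ)⁻¹ * ((5.75461:ℝ)⁻¹ * (14296249/196608) - 12))
      ≤ FLow (11/4) - FLow 1 := by
    rw [hF]
    apply mul_le_mul hc step1 (by positivity) (by positivity)
  have hnum : (0.15:ℝ) ≤ (2.50664:ℝ)⁻¹ *
      ((1.64873:ℝ)⁻¹ * ((5.75461:ℝ)⁻¹ * (14296249/196608) - 12)) := by norm_num
  linarith



lemma map_withDensity_equiv {α β : Type*} [MeasurableSpace α] [MeasurableSpace β]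
    (μ : Measure α) (e : α ≃ᵐ β) (f : α → ℝ≥0∞) (hf : Measurable f) :
    (μ.withDensity f).map e = (μ.map e).withDensity (f ∘ e.symm) := by
  ext s hs
  rw [Measure.map_apply e.measurable hs, withDensity_apply _ (e.measurable hs),
    withDensity_apply _ hs,
    setLIntegral_map hs (hf.comp e.symm.measurable) e.measurable]
  refine setLIntegral_congr_fun (e.measurable hs) (fun x _ => ?_)
  simp

lemma pi_gaussian_withDensity (d : ℕ) :
    (Measure.pi fun _ : Fin d => gaussianReal 0 1)
      = (volume : Measure (Fin d → ℝ)).withDensity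
          (fun v => ENNReal.ofReal (∏ i, stdNormalPdf (v i))) := by
  refine Measure.pi_eq fun s hs => ?_
  rw [withDensity_apply _ (MeasurableSet.univ_pi hs),
    ← lintegral_indicator (MeasurableSet.univ_pi hs)]
  have hind : (Set.pi univ s).indicator
        (fun v => ENNReal.ofReal (∏ i, stdNormalPdf (v i)))
      = fun v => ENNReal.ofReal (∏ i, (s i).indicator stdNormalPdf (v i)) := by
    funext v
    by_cases hv : v ∈ Set.pi univ s
    · rw [indicator_of_mem hv]
      congr 1
      exact Finset.prod_congr rfl fun i _ =>
        (indicator_of_mem (hv i (Set.mem_univ i)) _).symm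
    · rw [indicator_of_notMem hv]
      rw [Set.mem_pi] at hv
      push_neg at hv
      obtain ⟨i, -, hi⟩ := hv
      rw [Finset.prod_eq_zero (Finset.mem_univ i)]
      · simp
      · simp [indicator_of_notMem hi]
  rw [hind]
  have hint : ∀ i : Fin d, Integrable ((s i).indicator stdNormalPdf) := by
    intro i
    rw [stdNormalPdf_eq]
    exact (integrable_gaussianPDFReal 0 1).indicator (hs i)
  have hprodint : Integrable (fun v : Fin d → ℝ => ∏ i, (s i).indicator stdNormalPdf (v i)) :=
    Integrable.fintype_prod hint
  rw [← ofReal_integral_eq_lintegral_ofReal hprodint]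
  · rw [integral_fintype_prod_volume_eq_prod (f := fun (i : Fin d) => (s i).indicator stdNormalPdf)]
    rw [ENNReal.ofReal_prod_of_nonneg (fun i _ => ?_)]
    · refine Finset.prod_congr rfl fun i _ => ?_
      rw [integral_indicator (hs i), gaussianReal_apply_eq_integral _ one_ne_zero,
        stdNormalPdf_eq]
    · rw [integral_indicator (hs i)]
      refine setIntegral_nonneg (hs i) fun t _ => ?_
      rw [stdNormalPdf_eq]; exact gaussianPDFReal_nonneg 0 1 t
  · refine ae_of_all _ fun v => Finset.prod_nonneg fun i _ => ?_
    exact indicator_nonneg (fun t _ => by rw [stdNormalPdf_eq]; exact gaussianPDFReal_nonneg 0 1 t) _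

def stdGaussianDensity (d : ℕ) (z : Ed d) : ℝ≥0∞ :=
  ENNReal.ofReal (((Real.sqrt (2*Real.pi))⁻¹)^d * Real.exp (-‖z‖^2/2))

lemma prod_stdNormalPdf (z : Ed d) :
    ∏ i, stdNormalPdf (z i) = ((Real.sqrt (2*Real.pi))⁻¹)^d * Real.exp (-‖z‖^2/2) := by
  have hnorm : ‖z‖^2 = ∑ i, (z i)^2 := by
    rw [EuclideanSpace.norm_eq]
    rw [Real.sq_sqrt (Finset.sum_nonneg fun i _ => sq_nonneg _)]
    simp [Real.norm_eq_abs, sq_abs]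
  unfold stdNormalPdf
  rw [Finset.prod_mul_distrib, Finset.prod_const, ← Real.exp_sum, hnorm]
  simp only [Finset.card_univ, Fintype.card_fin]
  congr 1
  rw [← Finset.sum_div, ← Finset.sum_neg_distrib]

lemma measurable_stdGaussianDensity : Measurable (stdGaussianDensity d) := by
  apply Measurable.ennreal_ofReal
  fun_prop

lemma stdGaussian_eq_withDensity (d : ℕ) :
    stdGaussian d = (volume : Measure (Ed d)).withDensity (stdGaussianDensity d) := by
  unfold _root_.stdGaussian
  rw [pi_gaussian_withDensity d,
    map_withDensity_equiv _ (MeasurableEquiv.toLp 2 (Fin d → ℝ)) _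
      (by apply Measurable.ennreal_ofReal; simp only [stdNormalPdf]; fun_prop),
    (show MeasurePreserving (MeasurableEquiv.toLp 2 (Fin d → ℝ)) volume volume from
      (EuclideanSpace.volume_preserving_symm_measurableEquiv_toLp (Fin d)).symm _).map_eq]
  congr 1
  funext z
  simp only [Function.comp_apply, MeasurableEquiv.symm_symm]
  unfold stdGaussianDensity
  rw [← prod_stdNormalPdf (d := d) z]
  rfl

lemma stdGaussian_map_isometry (T : Ed d ≃ₗᵢ[ℝ] Ed d) :
    (stdGaussian d).map T = stdGaussian d := by
  rw [stdGaussian_eq_withDensity]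
  have hT : (⇑T : Ed d → Ed d) = ⇑(T.toHomeomorph.toMeasurableEquiv) := rfl
  rw [hT, map_withDensity_equiv _ _ _ measurable_stdGaussianDensity]
  have hvol : (volume : Measure (Ed d)).map T.toHomeomorph.toMeasurableEquiv = volume := by
    exact T.measurePreserving.map_eq
  rw [hvol]
  congr 1
  funext z
  simp only [Function.comp_apply]
  unfold stdGaussianDensity
  congr 3
  have : T.toHomeomorph.toMeasurableEquiv.symm z = T.symm z := rfl
  rw [this, T.symm.norm_map]

instance : IsProbabilityMeasure (stdGaussian d) := by
  unfold _root_.stdGaussian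
  exact Measure.isProbabilityMeasure_map
    (MeasurableEquiv.toLp 2 (Fin d → ℝ)).measurable.aemeasurable

lemma stdGaussian_halfspace (hd : 1 ≤ d) (e : Ed d) (he : ‖e‖ = 1) :
    stdGaussian d {z : Ed d | ⟪e, z⟫ ≤ -1}
      = ENNReal.ofReal (∫ t in Set.Ioi (1:ℝ), stdNormalPdf t) := by
  classical
  set i₀ : Fin d := ⟨0, hd⟩
  -- orthonormal basis with B i₀ = e
  have hcard : Module.finrank ℝ (Ed d) = Fintype.card (Fin d) := by
    simp [finrank_euclideanSpace]
  have horth : Orthonormal ℝ (({i₀} : Set (Fin d)).restrict (fun _ : Fin d => e)) := by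
    constructor
    · intro i; exact he
    · intro i j hij
      exfalso
      exact hij (Subtype.ext (by
        have hi := i.2; have hj := j.2
        simp only [Set.mem_singleton_iff] at hi hj
        rw [hi, hj]))
  obtain ⟨B, hB⟩ := horth.exists_orthonormalBasis_extension_of_card_eq hcard
  have hBe : B i₀ = e := hB i₀ rfl
  -- rewrite set as preimage under B.repr
  have hset : {z : Ed d | ⟪e, z⟫ ≤ -1}
      = ⇑B.repr ⁻¹' {w : EuclideanSpace ℝ (Fin d) | w i₀ ≤ -1} := by
    ext z
    simp only [Set.mem_setOf_eq, Set.mem_preimage]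
    rw [B.repr_apply_apply z i₀, hBe]
  rw [hset]
  have hSmeas : MeasurableSet {w : EuclideanSpace ℝ (Fin d) | w i₀ ≤ -1} := by
    have : {w : EuclideanSpace ℝ (Fin d) | w i₀ ≤ -1}
        = (fun w : EuclideanSpace ℝ (Fin d) => w i₀) ⁻¹' (Set.Iic (-1)) := rfl
    rw [this]
    have hm : Measurable fun w : EuclideanSpace ℝ (Fin d) => w i₀ :=
      (measurable_pi_apply i₀).comp (MeasurableEquiv.toLp 2 (Fin d → ℝ)).symm.measurable
    exact hm measurableSet_Iic
  rw [← Measure.map_apply B.repr.continuous.measurable hSmeas,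
    show ⇑B.repr = ⇑(B.repr : Ed d ≃ₗᵢ[ℝ] EuclideanSpace ℝ (Fin d)) from rfl,
    stdGaussian_map_isometry (B.repr : Ed d ≃ₗᵢ[ℝ] EuclideanSpace ℝ (Fin d))]
  -- now compute stdGaussian of the coordinate halfspace
  unfold _root_.stdGaussian
  rw [Measure.map_apply (MeasurableEquiv.toLp 2 (Fin d → ℝ)).measurable hSmeas]
  have hpre : ⇑(MeasurableEquiv.toLp 2 (Fin d → ℝ)) ⁻¹'
        {w : EuclideanSpace ℝ (Fin d) | w i₀ ≤ -1}
      = Set.pi univ (fun i => if i = i₀ then Set.Iic (-1:ℝ) else Set.univ) := by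
    ext v
    simp only [Set.mem_preimage, Set.mem_setOf_eq, Set.mem_pi, Set.mem_univ, true_implies]
    constructor
    · intro hv i
      by_cases hi : i = i₀
      · subst hi; simp only [if_pos rfl]; exact hv
      · simp [hi]
    · intro hv
      have := hv i₀
      simpa using this
  rw [hpre, Measure.pi_pi]
  have : ∀ i : Fin d, gaussianReal 0 1 (if i = i₀ then Set.Iic (-1:ℝ) else Set.univ)
      = if i = i₀ then gaussianReal 0 1 (Set.Iic (-1:ℝ)) else 1 := by
    intro i
    by_cases hi : i = i₀ <;> simp [hi]
  rw [Finset.prod_congr rfl fun i _ => this i, Finset.prod_ite_eq' Finset.univ i₀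
    (fun _ => gaussianReal 0 1 (Set.Iic (-1:ℝ)))]
  rw [if_pos (Finset.mem_univ i₀), gaussianReal_apply_eq_integral _ one_ne_zero]
  congr 1
  rw [← stdNormalPdf_eq]
  have hsymm : ∫ x in Set.Iic (-1:ℝ), stdNormalPdf x
      = ∫ t in Set.Ioi (1:ℝ), stdNormalPdf t := by
    rw [← integral_comp_neg_Ioi]
    refine setIntegral_congr_fun measurableSet_Ioi fun x _ => ?_
    unfold stdNormalPdf
    rw [show (-x)^2 = x^2 by ring]
  rw [hsymm]


lemma p0_ub : ∫ t in Set.Ioi (1:ℝ), stdNormalPdf t < 1 := by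
  have htot : (∫ t in Set.Ioi (1:ℝ), stdNormalPdf t) + ∫ t in (Set.Ioi (1:ℝ))ᶜ, stdNormalPdf t
      = 1 := by
    rw [integral_add_compl measurableSet_Ioi integrable_stdNormalPdf, stdNormalPdf_eq]
    exact ProbabilityTheory.integral_gaussianPDFReal_eq_one 0 one_ne_zero
  have hpos : (0:ℝ) < ∫ t in (Set.Ioi (1:ℝ))ᶜ, stdNormalPdf t := by
    rw [compl_Ioi]
    have hmono : ∫ t in Set.Ioc (0:ℝ) 1, stdNormalPdf t ≤ ∫ t in Set.Iic (1:ℝ), stdNormalPdf t := by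
      apply setIntegral_mono_set integrable_stdNormalPdf.integrableOn
        (ae_of_all _ stdNormalPdf_nonneg)
      exact HasSubset.Subset.eventuallyLE (fun t ht => ht.2)
    have hge : stdNormalPdf 1 * (volume (Set.Ioc (0:ℝ) 1)).toReal
        ≤ ∫ t in Set.Ioc (0:ℝ) 1, stdNormalPdf t := by
      apply setIntegral_ge_of_const_le_real measurableSet_Ioc (by simp [Real.volume_Ioc])
        (fun t ht => ?_) integrable_stdNormalPdf.integrableOn
      unfold stdNormalPdf
      have : Real.exp (-(1:ℝ)^2/2) ≤ Real.exp (-(t^2)/2) := by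
        apply Real.exp_le_exp.2
        nlinarith [ht.1.le, ht.2]
      have h2pi : (0:ℝ) ≤ (Real.sqrt (2*Real.pi))⁻¹ := by positivity
      exact mul_le_mul_of_nonneg_left this h2pi
    have hpdf1 : 0 < stdNormalPdf 1 := by
      unfold stdNormalPdf; positivity
    rw [Real.volume_Ioc] at hge
    norm_num at hge
    linarith
  linarith

lemma measurable_cplMap (h : ℝ) (b : Ed d → Ed d) (x y : Ed d) :
    Measurable (cplMap h b x y) := by
  have c1 : Continuous fun zu : Ed d × ℝ => hatPt h b x + Real.sqrt h • zu.1 := by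
    exact continuous_const.add (continuous_fst.fun_const_smul _)
  have cr : Continuous fun zu : Ed d × ℝ =>
      densRatio h (hatPt h b x) (hatPt h b y) (hatPt h b x + Real.sqrt h • zu.1) := by
    unfold densRatio
    exact (((((c1.sub continuous_const).norm.pow 2).sub
      ((c1.sub continuous_const).norm.pow 2)).div_const _).rexp)
  have hcond : MeasurableSet {zu : Ed d × ℝ | zu.2 ≤
      densRatio h (hatPt h b x) (hatPt h b y) (hatPt h b x + Real.sqrt h • zu.1)} :=
    (isClosed_le continuous_snd cr).measurableSet
  have c2 : Continuous fun zu : Ed d × ℝ =>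
      reflPt h (hatPt h b x) (hatPt h b y) zu.1 := by
    unfold reflPt
    refine continuous_const.add (Continuous.fun_const_smul ?_ _)
    refine continuous_fst.sub (Continuous.fun_smul ?_ continuous_const)
    exact continuous_const.mul (continuous_const.inner continuous_fst)
  exact c1.measurable.prodMk
    (Measurable.ite hcond c1.measurable c2.measurable)

instance : IsProbabilityMeasure unif01 :=
  ⟨by rw [unif01, Measure.restrict_apply_univ]; simp [Real.volume_Ioc]⟩

end AuxProof

/-- Lemma 2.9 (iii): there is a universal constant `p₀ ∈ (0,1)`,
`p₀ ≥ 0.15`, namely `p₀ = ∫₁^∞ φ_{0,1}(t)dt`, such that `π(x,y) ≥ p₀` whenever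
`r̂ ≤ 2√h`, for the coupled Euler transition steps. -/
theorem stmt8 :
    ∃ p₀ : ℝ, p₀ ∈ Set.Ioo (0:ℝ) 1 ∧ 0.15 ≤ p₀ ∧
      p₀ = ∫ t in Set.Ioi (1:ℝ), stdNormalPdf t ∧
      ∀ d : ℕ, 1 ≤ d → ∀ h : ℝ, 0 < h → ∀ b : Ed d → Ed d, Measurable b →
      ∀ x y : Ed d, ‖hatPt h b x - hatPt h b y‖ ≤ 2 * Real.sqrt h →
        p₀ ≤ piE h b x y := by
  refine ⟨∫ t in Set.Ioi (1:ℝ), stdNormalPdf t,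
    ⟨lt_of_lt_of_le (by norm_num) p0_lb, p0_ub⟩, p0_lb, rfl, ?_⟩
  intro d hd h hh b hb x y hr
  classical
  set p₀ : ℝ := ∫ t in Set.Ioi (1:ℝ), stdNormalPdf t with hp₀
  have hlb := p0_lb
  have hub := p0_ub
  set xh := hatPt h b x with hxh
  set yh := hatPt h b y with hyh
  set v : Ed d := xh - yh with hv
  have hsqrt : (0:ℝ) < Real.sqrt h := Real.sqrt_pos.2 hh
  set A : Set (Ed d) := {z | ⟪v, z⟫ ≤ -‖v‖} with hA
  have hSmeas : MeasurableSet {w : Ed d × Ed d | w.1 = w.2} :=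
    (isClosed_eq continuous_fst continuous_snd).measurableSet
  have hmap := measurable_cplMap (d := d) h b x y
  have hsub : A ×ˢ Set.Ioc (0:ℝ) 1 ⊆ cplMap h b x y ⁻¹' {w | w.1 = w.2} := by
    rintro ⟨z, u⟩ ⟨hz, hu⟩
    have hz' : ⟪v, z⟫ ≤ -‖v‖ := hz
    have hcond : u ≤ densRatio h (hatPt h b x) (hatPt h b y)
        (hatPt h b x + Real.sqrt h • z) := by
      unfold densRatio
      have e1 : (hatPt h b x + Real.sqrt h • z) - hatPt h b x = Real.sqrt h • z := by
        abel
      have e2 : (hatPt h b x + Real.sqrt h • z) - hatPt h b y = v + Real.sqrt h • z := by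
        rw [hv, hxh, hyh]; abel
      have hsm : ‖Real.sqrt h • z‖^2 = h * ‖z‖^2 := by
        rw [norm_smul, Real.norm_eq_abs, abs_of_nonneg hsqrt.le, mul_pow,
          Real.sq_sqrt hh.le]
      have hnum : ‖(hatPt h b x + Real.sqrt h • z) - hatPt h b x‖^2
          - ‖(hatPt h b x + Real.sqrt h • z) - hatPt h b y‖^2
          = -(‖v‖^2 + 2 * (Real.sqrt h * ⟪v, z⟫)) := by
        rw [e1, e2, hsm, norm_add_sq_real, real_inner_smul_right, hsm]
        ring
      rw [hnum]
      have hnn : 0 ≤ -(‖v‖^2 + 2 * (Real.sqrt h * ⟪v, z⟫)) / (2 * h) := by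
        apply div_nonneg _ (by linarith)
        nlinarith [norm_nonneg v, hr]
      exact hu.2.trans (Real.one_le_exp hnn)
    simp only [Set.mem_preimage, cplMap, Set.mem_setOf_eq, if_pos hcond]
  have key : ENNReal.ofReal p₀ ≤ cplMeasure h b x y {w | w.1 = w.2} := by
    rw [cplMeasure, Measure.map_apply hmap hSmeas]
    refine le_trans ?_ (measure_mono hsub)
    rw [Measure.prod_prod]
    have hunif : unif01 (Set.Ioc (0:ℝ) 1) = 1 := by
      rw [unif01, Measure.restrict_apply measurableSet_Ioc]
      simp [Real.volume_Ioc]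
    rw [hunif, mul_one]
    by_cases hv0 : v = 0
    · have hAuniv : A = Set.univ := by
        ext z
        simp [hA, hv0]
      rw [hAuniv, measure_univ]
      exact ENNReal.ofReal_le_one.2 hub.le
    · have hvpos : 0 < ‖v‖ := norm_pos_iff.2 hv0
      have hAeq : A = {z : Ed d | ⟪(‖v‖⁻¹ • v : Ed d), z⟫ ≤ -1} := by
        ext z
        simp only [hA, Set.mem_setOf_eq, real_inner_smul_left]
        constructor
        · intro hzz
          rw [inv_mul_le_iff₀ hvpos]
          nlinarith
        · intro hzz
          rw [inv_mul_le_iff₀ hvpos] at hzz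
          nlinarith
      rw [hAeq, stdGaussian_halfspace hd (‖v‖⁻¹ • v) (norm_smul_inv_norm hv0)]
  have hfin : cplMeasure h b x y {w | w.1 = w.2} ≠ ⊤ := by
    rw [cplMeasure, Measure.map_apply hmap hSmeas]
    exact (measure_lt_top _ _).ne
  rw [piE]
  exact (ENNReal.ofReal_le_iff_le_toReal hfin).mp key

end
end
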